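/- Let A be a Banach *-algebra with proper involution and a ∈ A. Then a is generalized right group invertible if and only if there exists an idempotent p ∈ A such that (1−p)a(1−p) is right invertible in the corner algebra (1−p)A(1−p), (a*ap)* = a*ap, and pa = pap is quasinilpotent. -/

import Mathlib

open Filter Topology

/-- `q` is quasinilpotent: `‖qⁿ‖^{1/n} → 0`. -/
def Quasinilpotent {A : Type*} [NormedRing A] (q : A) : Prop :=
  Tendsto (fun n : ℕ => ‖q ^ n‖ ^ (1 / (n : ℝ))) atTop (𝓝 0)

/-- `x` is a generalized right group inverse of `a`. -/
def IsGRGInv {A : Type*} [NormedRing A] [StarRing A] (a x : A) : Prop :=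
  x = a * x ^ 2 ∧ star (star a * a ^ 2 * x) = star a * a ^ 2 * x ∧
    Tendsto (fun n : ℕ => ‖a ^ n - a * x * a ^ n‖ ^ (1 / (n : ℝ))) atTop (𝓝 0)

lemma pa_pow_aux {A : Type*} [Ring A] (p a : A) (hp : p * p = p) (hpa : p * a = p * a * p) :
    ∀ n : ℕ, (p * a) ^ (n + 1) = p * a ^ (n + 1) ∧ p * a ^ (n + 1) * p = p * a ^ (n + 1) := by
  intro n
  induction n with
  | zero => exact ⟨by simp, by simpa using hpa.symm⟩
  | succ k ih =>
    have h1 : (p * a) ^ (k + 2) = p * a ^ (k + 2) := by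
      rw [pow_succ, ih.1, ← mul_assoc, ih.2, mul_assoc, ← pow_succ]
    refine ⟨h1, ?_⟩
    rw [← h1, pow_succ, mul_assoc, ← hpa, ← pow_succ, h1]

lemma tend_aux (r : ℕ → ℝ) (hr : ∀ n, 0 ≤ r n)
    (h : Tendsto (fun n : ℕ => r n ^ (1 / (n : ℝ))) atTop (𝓝 0)) (M : ℝ) (hM : 0 ≤ M) :
    Tendsto (fun n : ℕ => r n * M ^ n) atTop (𝓝 0) := by
  have hev : ∀ᶠ n : ℕ in atTop, r n ^ (1 / (n : ℝ)) < 1 / (2 * (M + 1)) := by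
    exact h.eventually_lt_const (div_pos one_pos (by linarith))
  apply squeeze_zero' (g := fun n : ℕ => (1/2 : ℝ) ^ n)
  · filter_upwards with n; exact mul_nonneg (hr n) (pow_nonneg hM n)
  · filter_upwards [hev, eventually_ge_atTop 1] with n hn hn1
    have hnn : (n : ℝ) ≠ 0 := Nat.cast_ne_zero.mpr (by omega)
    have key : (r n ^ (1 / (n : ℝ))) ^ n = r n := by
      rw [← Real.rpow_natCast (r n ^ (1 / (n : ℝ))) n, ← Real.rpow_mul (hr n)]
      rw [one_div, inv_mul_cancel₀ hnn, Real.rpow_one]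
    calc r n * M ^ n = (r n ^ (1 / (n : ℝ))) ^ n * M ^ n := by rw [key]
      _ = (r n ^ (1 / (n : ℝ)) * M) ^ n := by rw [mul_pow]
      _ ≤ (1/2 : ℝ) ^ n := by
          apply pow_le_pow_left₀ (mul_nonneg (Real.rpow_nonneg (hr n) _) hM)
          have : r n ^ (1 / (n : ℝ)) * M ≤ (1 / (2 * (M + 1))) * (M + 1) := by
            apply mul_le_mul hn.le (by linarith) hM (by positivity)
          calc r n ^ (1 / (n : ℝ)) * M ≤ (1 / (2 * (M + 1))) * (M + 1) := this
            _ = 1/2 := by field_simp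
  · exact tendsto_pow_atTop_nhds_zero_of_lt_one (by norm_num) (by norm_num)

lemma eq_zero_aux {A : Type*} [NormedRing A] (c : A) (t : ℕ → ℝ)
    (ht : Tendsto t atTop (𝓝 0)) (hb : ∀ᶠ n in atTop, ‖c‖ ≤ t n) : c = 0 := by
  have h0 : ‖c‖ ≤ 0 := ge_of_tendsto ht hb
  simpa using le_antisymm h0 (norm_nonneg c)


/-- `a` is generalized right group invertible iff there is an idempotent
`p` with (1−p)a(1−p) right invertible in the corner algebra (1−p)A(1−p),
(a*ap)* = a*ap, and pa = pap quasinilpotent. -/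
theorem grg_iff_idempotent
    {A : Type*} [NormedRing A] [StarRing A] [NormedAlgebra ℂ A] [CompleteSpace A]
    (hproper : ∀ x : A, star x * x = 0 → x = 0) (a : A) :
    (∃ x : A, IsGRGInv a x) ↔
      (∃ p : A, p * p = p ∧
        (∃ v : A, ((1 - p) * a * (1 - p)) * ((1 - p) * v * (1 - p)) = 1 - p) ∧
        star (star a * a * p) = star a * a * p ∧
        p * a = p * a * p ∧ Quasinilpotent (p * a)) := by
  constructor
  · rintro ⟨x, h1, h2, h3⟩
    have hM1 : (1:ℝ) ≤ ‖x‖ + 1 := by linarith [norm_nonneg x]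
    have ht : Tendsto (fun n : ℕ => ‖a ^ n - a * x * a ^ n‖ * (‖x‖ + 1) ^ n) atTop (𝓝 0) :=
      tend_aux _ (fun n => norm_nonneg _) h3 (‖x‖ + 1) (by linarith)
    -- e = a*x equals a^{n+1} x^{n+1}
    have key : ∀ n : ℕ, a * x = a ^ (n+1) * x ^ (n+1) := by
      intro n
      induction n with
      | zero => simp
      | succ k ih =>
        have hx : x ^ (k+1) = a * x ^ (k+2) := by
          calc x ^ (k+1) = x * x ^ k := by rw [pow_succ']
            _ = (a * x ^ 2) * x ^ k := by rw [← h1]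
            _ = a * (x ^ 2 * x ^ k) := by rw [mul_assoc]
            _ = a * x ^ (k + 2) := by rw [← pow_add, add_comm 2 k]
        calc a * x = a ^ (k+1) * x ^ (k+1) := ih
          _ = a ^ (k+1) * (a * x ^ (k+2)) := by rw [hx]
          _ = a ^ (k+2) * x ^ (k+2) := by rw [← mul_assoc, ← pow_succ]
    -- bound helper
    have hbound : ∀ n : ℕ, ‖(a ^ (n+1) - a * x * a ^ (n+1)) * x ^ (n+1)‖
        ≤ ‖a ^ (n+1) - a * x * a ^ (n+1)‖ * (‖x‖ + 1) ^ (n+1) := by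
      intro n
      calc ‖(a ^ (n+1) - a * x * a ^ (n+1)) * x ^ (n+1)‖
          ≤ ‖a ^ (n+1) - a * x * a ^ (n+1)‖ * ‖x ^ (n+1)‖ := norm_mul_le _ _
        _ ≤ ‖a ^ (n+1) - a * x * a ^ (n+1)‖ * (‖x‖ + 1) ^ (n+1) := by
            apply mul_le_mul_of_nonneg_left _ (norm_nonneg _)
            calc ‖x ^ (n+1)‖ ≤ ‖x‖ ^ (n+1) := norm_pow_le' x (Nat.succ_pos n)
              _ ≤ (‖x‖ + 1) ^ (n+1) := pow_le_pow_left₀ (norm_nonneg x) (by linarith) _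
    -- idempotency : (a x)(a x) = a x
    have hee : (a * x) * (a * x) - a * x = 0 := by
      apply eq_zero_aux _ (fun n : ℕ => ‖a ^ (n+1) - a * x * a ^ (n+1)‖ * (‖x‖ + 1) ^ (n+1))
        (ht.comp (tendsto_add_atTop_nat 1))
      filter_upwards with n
      have hid : (a * x) * (a * x) - a * x = -((a ^ (n+1) - a * x * a ^ (n+1)) * x ^ (n+1)) := by
        have h := key n
        calc (a * x) * (a * x) - a * x
            = (a * x) * (a ^ (n+1) * x ^ (n+1)) - a ^ (n+1) * x ^ (n+1) := by rw [← h]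
          _ = -((a ^ (n+1) - a * x * a ^ (n+1)) * x ^ (n+1)) := by noncomm_ring
      rw [hid, norm_neg]
      exact hbound n
    have he2 : (a * x) * (a * x) = a * x := by rwa [sub_eq_zero] at hee
    -- a e = e a e
    have haee : a * (a * x) - (a * x) * (a * (a * x)) = 0 := by
      apply eq_zero_aux _ (fun n : ℕ => ‖a ^ (n+2) - a * x * a ^ (n+2)‖ * (‖x‖ + 1) ^ (n+2))
        (ht.comp (tendsto_add_atTop_nat 2))
      filter_upwards with n
      have hid : a * (a * x) - (a * x) * (a * (a * x))
          = (a ^ (n+2) - a * x * a ^ (n+2)) * x ^ (n+1) := by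
        have h := key n
        calc a * (a * x) - (a * x) * (a * (a * x))
            = a * (a ^ (n+1) * x ^ (n+1)) - (a * x) * (a * (a ^ (n+1) * x ^ (n+1))) := by rw [← h]
          _ = (a * a ^ (n+1) - a * x * (a * a ^ (n+1))) * x ^ (n+1) := by noncomm_ring
          _ = (a ^ (n+2) - a * x * a ^ (n+2)) * x ^ (n+1) := by rw [← pow_succ']
      rw [hid]
      calc ‖(a ^ (n+2) - a * x * a ^ (n+2)) * x ^ (n+1)‖
          ≤ ‖a ^ (n+2) - a * x * a ^ (n+2)‖ * ‖x ^ (n+1)‖ := norm_mul_le _ _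
        _ ≤ ‖a ^ (n+2) - a * x * a ^ (n+2)‖ * (‖x‖ + 1) ^ (n+2) := by
            apply mul_le_mul_of_nonneg_left _ (norm_nonneg _)
            calc ‖x ^ (n+1)‖ ≤ ‖x‖ ^ (n+1) := norm_pow_le' x (Nat.succ_pos n)
              _ ≤ (‖x‖ + 1) ^ (n+1) := pow_le_pow_left₀ (norm_nonneg x) (by linarith) _
              _ ≤ (‖x‖ + 1) ^ (n+2) := pow_le_pow_right₀ hM1 (by omega)
    refine ⟨1 - a * x, ?_, ⟨x, ?_⟩, ?_, ?_, ?_⟩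
    · -- idempotent
      have expand : (1 - a * x) * (1 - a * x)
          = 1 - a * x - a * x + (a * x) * (a * x) := by noncomm_ring
      rw [expand, he2]; noncomm_ring
    · -- corner right inverse
      simp only [sub_sub_cancel]
      have hex : (a * x) * x = x := by
        rw [mul_assoc, ← pow_two, ← h1]
      rw [hex]
      have reassoc : (a * x) * a * (a * x) * (x * (a * x))
          = (a * x) * a * ((a * x) * x) * (a * x) := by noncomm_ring
      rw [reassoc, hex]
      have reassoc2 : (a * x) * a * x * (a * x) = (a * x) * (a * x) * (a * x) := by noncomm_ring
      rw [reassoc2, he2, he2]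
    · -- star condition
      have hsa : star (star a * a) = star a * a := by simp [star_mul]
      have hrw : star a * a * (1 - a * x) = star a * a - star a * a ^ 2 * x := by noncomm_ring
      rw [hrw, star_sub, hsa, h2]
    · -- p a = p a p
      have expand : (1 - a * x) * a * (1 - a * x)
          = (1 - a * x) * a - (a * (a * x) - (a * x) * (a * (a * x))) := by noncomm_ring
      rw [expand, haee, sub_zero]
    · -- quasinilpotent
      have hp : (1 - a * x) * (1 - a * x) = 1 - a * x := by
        have expand : (1 - a * x) * (1 - a * x)
            = 1 - a * x - a * x + (a * x) * (a * x) := by noncomm_ring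
        rw [expand, he2]; noncomm_ring
      have hpap : (1 - a * x) * a = (1 - a * x) * a * (1 - a * x) := by
        have expand : (1 - a * x) * a * (1 - a * x)
            = (1 - a * x) * a - (a * (a * x) - (a * x) * (a * (a * x))) := by noncomm_ring
        rw [expand, haee, sub_zero]
      refine Tendsto.congr' ?_ h3
      filter_upwards [eventually_ge_atTop 1] with n hn
      obtain ⟨k, rfl⟩ : ∃ k, n = k + 1 := ⟨n - 1, by omega⟩
      have hk := (pa_pow_aux (1 - a * x) a hp hpap k).1
      congr 2
      rw [hk]
      noncomm_ring
  · rintro ⟨p, hp, ⟨v, hv⟩, hstar, hpap, hq⟩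
    have hqq : (1 - p) * (1 - p) = 1 - p := by
      have expand : (1 - p) * (1 - p) = 1 - p - p + p * p := by noncomm_ring
      rw [expand, hp]; noncomm_ring
    have haq : (1 - p) * a * (1 - p) = a * (1 - p) := by
      have expand : (1 - p) * a * (1 - p) = a * (1 - p) - (p * a - p * a * p) := by noncomm_ring
      rw [expand, ← hpap, sub_self, sub_zero]
    have haw : a * ((1 - p) * v * (1 - p)) = 1 - p := by
      calc a * ((1 - p) * v * (1 - p)) = (a * (1 - p)) * (v * (1 - p)) := by noncomm_ring
        _ = ((1 - p) * a * (1 - p)) * (v * (1 - p)) := by rw [haq]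
        _ = ((1 - p) * a * ((1 - p) * (1 - p))) * (v * (1 - p)) := by rw [hqq]
        _ = ((1 - p) * a * (1 - p)) * ((1 - p) * v * (1 - p)) := by noncomm_ring
        _ = 1 - p := hv
    refine ⟨(1 - p) * v * (1 - p), ?_, ?_, ?_⟩
    · calc (1 - p) * v * (1 - p)
          = ((1 - p) * (1 - p)) * v * (1 - p) := by rw [hqq]
        _ = (1 - p) * ((1 - p) * v * (1 - p)) := by noncomm_ring
        _ = (a * ((1 - p) * v * (1 - p))) * ((1 - p) * v * (1 - p)) := by rw [haw]
        _ = a * ((1 - p) * v * (1 - p)) ^ 2 := by noncomm_ring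
    · have hsa : star (star a * a) = star a * a := by simp [star_mul]
      have hrw : star a * a ^ 2 * ((1 - p) * v * (1 - p))
          = star a * (a * (a * ((1 - p) * v * (1 - p)))) := by noncomm_ring
      have hrw2 : star a * a ^ 2 * ((1 - p) * v * (1 - p))
          = star a * a - star a * a * p := by
        rw [hrw, haw]; noncomm_ring
      rw [hrw2, star_sub, hsa, hstar]
    · refine Tendsto.congr' ?_ hq
      filter_upwards [eventually_ge_atTop 1] with n hn
      obtain ⟨k, rfl⟩ : ∃ k, n = k + 1 := ⟨n - 1, by omega⟩
      have hk := (pa_pow_aux p a hp hpap k).1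
      congr 2
      rw [hk]
      have : a * ((1 - p) * v * (1 - p)) * a ^ (k+1)
          = (a * ((1 - p) * v * (1 - p))) * a ^ (k+1) := by noncomm_ring
      rw [this, haw]
      noncomm_ring
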